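/- Let f : [0,∞) → ℝ be differentiable, weakly increasing and concave with f(0) = 0. Then the function x ↦ (f(√x))² is concave on [0,∞). -/

import Mathlib

theorem stmt17 (f : ℝ → ℝ)
    (hdiff : DifferentiableOn ℝ f (Set.Ici 0))
    (hmono : MonotoneOn f (Set.Ici 0))
    (hconc : ConcaveOn ℝ (Set.Ici 0) f)
    (hf0 : f 0 = 0) :
    ConcaveOn ℝ (Set.Ici 0) (fun x => (f (Real.sqrt x)) ^ 2) := by
  -- differentiability of f at positive points
  have hd : ∀ t : ℝ, 0 < t → DifferentiableAt ℝ f t := fun t ht =>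
    (hdiff t (le_of_lt ht)).differentiableAt (Ici_mem_nhds ht)
  -- f is nonneg on Ici 0
  have hf_nonneg : ∀ t : ℝ, 0 ≤ t → 0 ≤ f t := fun t ht => by
    have := hmono (Set.self_mem_Ici) ht ht
    linarith [hf0 ▸ this]
  -- deriv f is nonneg on Ioi 0
  have hF_nonneg : ∀ t : ℝ, 0 < t → 0 ≤ deriv f t := by
    intro t ht
    have hmem : t + 1 ∈ Set.Ici (0:ℝ) := Set.mem_Ici.mpr (by linarith)
    have h1 : slope f t (t + 1) ≤ deriv f t :=
      hconc.slope_le_deriv (Set.mem_Ici.mpr (le_of_lt ht)) hmem (by linarith) (hd t ht)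
    have hs : slope f t (t + 1) = f (t + 1) - f t := by
      rw [slope_def_field]; simp
    have h2 : f t ≤ f (t + 1) :=
      hmono (Set.mem_Ici.mpr (le_of_lt ht)) hmem (by linarith)
    rw [hs] at h1
    linarith
  -- deriv f is antitone on Ioi 0
  have hF_anti : AntitoneOn (deriv f) (Set.Ioi 0) := by
    have := (hconc.subset Set.Ioi_subset_Ici_self (convex_Ioi 0)).antitoneOn_deriv
      (fun x hx => hd x hx)
    exact this
  -- the ratio inequality : for 0 < a ≤ b, a * f b ≤ b * f a
  have hratio : ∀ a b : ℝ, 0 < a → a ≤ b → a * f b ≤ b * f a := by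
    intro a b ha hab
    have hb : 0 < b := lt_of_lt_of_le ha hab
    have w1 : (0:ℝ) ≤ 1 - a / b := by
      have : a / b ≤ 1 := (div_le_one hb).mpr hab
      linarith
    have w2 : (0:ℝ) ≤ a / b := by positivity
    have w3 : (1 - a / b) + a / b = 1 := by ring
    have key := hconc.2 Set.self_mem_Ici (Set.mem_Ici.mpr (le_of_lt hb)) w1 w2 w3
    simp only [smul_eq_mul] at key
    have hb' : (1 - a / b) * 0 + (a / b) * b = a := by field_simp; ring
    rw [hb', hf0] at key
    have : (a / b) * f b ≤ f a := by linarith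
    calc a * f b = b * ((a / b) * f b) := by field_simp
    _ ≤ b * f a := by
        apply mul_le_mul_of_nonneg_left this (le_of_lt hb)
  -- derivative formula for g
  have hg' : ∀ x : ℝ, 0 < x →
      HasDerivAt (fun x => (f (Real.sqrt x)) ^ 2)
        (2 * f (Real.sqrt x) ^ 1 * (deriv f (Real.sqrt x) * (1 / (2 * Real.sqrt x)))) x := by
    intro x hx
    have hsx : 0 < Real.sqrt x := Real.sqrt_pos.mpr hx
    have h1 : HasDerivAt Real.sqrt (1 / (2 * Real.sqrt x)) x :=
      Real.hasDerivAt_sqrt (ne_of_gt hx)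
    have h2 : HasDerivAt f (deriv f (Real.sqrt x)) (Real.sqrt x) :=
      (hd _ hsx).hasDerivAt
    have h3 : HasDerivAt (fun x => f (Real.sqrt x))
        (deriv f (Real.sqrt x) * (1 / (2 * Real.sqrt x))) x := h2.comp x h1
    exact h3.pow 2
  -- continuity of g on Ici 0
  have hcont : ContinuousOn (fun x => (f (Real.sqrt x)) ^ 2) (Set.Ici 0) := by
    apply ContinuousOn.pow
    exact hdiff.continuousOn.comp Real.continuous_sqrt.continuousOn
      (fun x _ => Real.sqrt_nonneg x)
  -- apply the criterion
  have hIoi : interior (Set.Ici (0:ℝ)) = Set.Ioi 0 := interior_Ici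
  apply AntitoneOn.concaveOn_of_deriv (convex_Ici 0) hcont
  · rw [hIoi]
    intro x hx
    exact ((hg' x hx).differentiableAt).differentiableWithinAt
  · rw [hIoi]
    intro x hx y hy hxy
    rw [(hg' x hx).deriv, (hg' y hy).deriv]
    set a := Real.sqrt x with ha
    set b := Real.sqrt y with hb
    have hax : 0 < a := Real.sqrt_pos.mpr hx
    have hbx : 0 < b := Real.sqrt_pos.mpr hy
    have hab' : a ≤ b := Real.sqrt_le_sqrt hxy
    have hFa : 0 ≤ deriv f a := hF_nonneg a hax
    have hFb : 0 ≤ deriv f b := hF_nonneg b hbx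
    have hFba : deriv f b ≤ deriv f a := hF_anti hax hbx hab'
    have hfa : 0 ≤ f a := hf_nonneg a (le_of_lt hax)
    have hfb : 0 ≤ f b := hf_nonneg b (le_of_lt hbx)
    have hr : a * f b ≤ b * f a := hratio a b hax hab'
    -- goal : 2 * f b ^ 1 * (F b * (1/(2*b))) ≤ 2 * f a ^ 1 * (F a * (1/(2*a)))
    rw [pow_one, pow_one]
    have e1 : 2 * f b * (deriv f b * (1 / (2 * b))) = f b * deriv f b / b := by
      field_simp
    have e2 : 2 * f a * (deriv f a * (1 / (2 * a))) = f a * deriv f a / a := by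
      field_simp
    rw [e1, e2, div_le_div_iff₀ hbx hax]
    nlinarith [mul_le_mul_of_nonneg_right hr hFb,
      mul_le_mul_of_nonneg_left hFba (mul_nonneg (le_of_lt hbx) hfa)]
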